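/- Let A be a nonempty finite set, let φ be a regularizer satisfying Assumption 2, let λ > 0, and let Q : A → ℝ. A probability vector p ∈ Δ_A maximizes the per-state regularized objective F_λ(p) = ∑_a (p a · Q a + λ·f_φ(p a)) over Δ_A if and only if there exists μ ∈ ℝ such that for every a ∈ A: (i) if p a > 0 then Q a + λ·f'_φ(p a) = μ, and (ii) if p a = 0 then Q a + λ·f'_φ(x) ≤ μ for every x ∈ (0,1), where f'_φ(x) = φ(x) + x·φ'(x). -/

import Mathlib

open Filter

/-- A regularizer: on the interval (0,1], φ is nonincreasing, φ(1) = 0,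
φ is differentiable, and `x ↦ x·φ(x)` is strictly concave. -/
def IsRegularizer (φ : ℝ → ℝ) : Prop :=
  AntitoneOn φ (Set.Ioc 0 1) ∧ φ 1 = 0 ∧ DifferentiableOn ℝ φ (Set.Ioc 0 1) ∧
    StrictConcaveOn ℝ (Set.Ioc 0 1) (fun x => x * φ x)

/-- Assumption 2: `x·φ(x) → 0` as `x → 0⁺`. -/
def Assumption2 (φ : ℝ → ℝ) : Prop :=
  Tendsto (fun x => x * φ x) (nhdsWithin 0 (Set.Ioi 0)) (nhds 0)

/-- The derivative of `f_φ(x) = x·φ(x)` on (0,1], namely `f'_φ(x) = φ(x) + x·φ'(x)`. -/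
noncomputable def fderivPhi (φ : ℝ → ℝ) (x : ℝ) : ℝ :=
  φ x + x * derivWithin φ (Set.Ioc 0 1) x

section KKTAuxSection

variable {φ : ℝ → ℝ}


lemma kktAux_fphi_hasDeriv (hφ : IsRegularizer φ) {x : ℝ} (hx : x ∈ Set.Ioc (0:ℝ) 1) :
    HasDerivWithinAt (fun y : ℝ => y * φ y) (fderivPhi φ x) (Set.Ioc 0 1) x := by
  have h1 : HasDerivWithinAt φ (derivWithin φ (Set.Ioc 0 1) x) (Set.Ioc 0 1) x :=
    (hφ.2.2.1 x hx).hasDerivWithinAt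
  have h2 := (hasDerivWithinAt_id x (Set.Ioc (0:ℝ) 1)).mul h1
  simpa only [one_mul, id_eq, fderivPhi, Pi.mul_def] using h2

lemma kktAux_slope_tendsto (hφ : IsRegularizer φ) {x : ℝ} (hx : x ∈ Set.Ioc (0:ℝ) 1) :
    Tendsto (slope (fun y : ℝ => y * φ y) x) (nhdsWithin x (Set.Ioc 0 1 \ {x}))
      (nhds (fderivPhi φ x)) :=
  hasDerivWithinAt_iff_tendsto_slope.1 (kktAux_fphi_hasDeriv hφ hx)

lemma kktAux_nebot_diff {x : ℝ} (hx : x ∈ Set.Ioc (0:ℝ) 1) :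
    (nhdsWithin x (Set.Ioc 0 1 \ {x})).NeBot := by
  have h : Set.Ioo 0 x ⊆ Set.Ioc 0 1 \ {x} := fun y hy =>
    ⟨⟨hy.1, hy.2.le.trans hx.2⟩, ne_of_lt hy.2⟩
  have hx0 : (0:ℝ) < x := hx.1
  have hcl : x ∈ closure (Set.Ioo (0:ℝ) x) := by
    rw [closure_Ioo hx0.ne]
    exact ⟨hx0.le, le_rfl⟩
  have h1 : (nhdsWithin x (Set.Ioo (0:ℝ) x)).NeBot := mem_closure_iff_nhdsWithin_neBot.1 hcl
  exact h1.mono (nhdsWithin_mono x h)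

lemma kktAux_secant_anti (hφ : IsRegularizer φ) {x u v : ℝ} (hx : x ∈ Set.Ioc (0:ℝ) 1)
    (hu : u ∈ Set.Ioc (0:ℝ) 1) (hv : v ∈ Set.Ioc (0:ℝ) 1) (hux : u ≠ x) (hvx : v ≠ x)
    (huv : u ≤ v) :
    (v * φ v - x * φ x) / (v - x) ≤ (u * φ u - x * φ x) / (u - x) := by
  have h := (hφ.2.2.2.concaveOn.neg).secant_mono hx hu hv hux hvx huv
  simp only [Pi.neg_apply] at h
  have e1 : (-(u * φ u) - -(x * φ x)) / (u - x) = -((u * φ u - x * φ x) / (u - x)) := by ring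
  have e2 : (-(v * φ v) - -(x * φ x)) / (v - x) = -((v * φ v - x * φ x) / (v - x)) := by ring
  rw [e1, e2] at h
  linarith

lemma kktAux_superg (hφ : IsRegularizer φ) {x y : ℝ} (hx : x ∈ Set.Ioc (0:ℝ) 1)
    (hy : y ∈ Set.Ioc (0:ℝ) 1) :
    y * φ y ≤ x * φ x + fderivPhi φ x * (y - x) := by
  rcases eq_or_ne y x with rfl | hne
  · simp
  haveI := kktAux_nebot_diff hx
  rcases lt_or_gt_of_ne hne with hlt | hgt
  · -- y < x
    have hev : ∀ᶠ z in nhdsWithin x (Set.Ioc 0 1 \ {x}),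
        slope (fun y : ℝ => y * φ y) x z ≤ (y * φ y - x * φ x) / (y - x) := by
      filter_upwards [eventually_mem_nhdsWithin,
        eventually_nhdsWithin_of_eventually_nhds (eventually_gt_nhds hlt)] with z hz hyz
      rw [slope_def_field]
      exact kktAux_secant_anti hφ hx hy hz.1 hne (fun h => hz.2 (Set.mem_singleton_iff.2 h)) hyz.le
    have hle : fderivPhi φ x ≤ (y * φ y - x * φ x) / (y - x) :=
      le_of_tendsto (kktAux_slope_tendsto hφ hx) hev
    have hyx : y - x < 0 := by linarith
    rw [le_div_iff_of_neg hyx] at hle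
    linarith
  · -- y > x
    have hev : ∀ᶠ z in nhdsWithin x (Set.Ioc 0 1 \ {x}),
        (y * φ y - x * φ x) / (y - x) ≤ slope (fun y : ℝ => y * φ y) x z := by
      filter_upwards [eventually_mem_nhdsWithin,
        eventually_nhdsWithin_of_eventually_nhds (eventually_lt_nhds hgt)] with z hz hyz
      rw [slope_def_field]
      exact kktAux_secant_anti hφ hx hz.1 hy (fun h => hz.2 (Set.mem_singleton_iff.2 h)) hne hyz.le
    have hle : (y * φ y - x * φ x) / (y - x) ≤ fderivPhi φ x :=
      ge_of_tendsto (kktAux_slope_tendsto hφ hx) hev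
    rw [div_le_iff₀ (by linarith : (0:ℝ) < y - x)] at hle
    linarith

lemma kktAux_superg0 (hφ : IsRegularizer φ) (hA2 : Assumption2 φ) {x : ℝ}
    (hx : x ∈ Set.Ioc (0:ℝ) 1) :
    0 ≤ x * φ x + fderivPhi φ x * (0 - x) := by
  have hev : ∀ᶠ t in nhdsWithin (0:ℝ) (Set.Ioi 0),
      t * φ t ≤ x * φ x + fderivPhi φ x * (t - x) := by
    filter_upwards [Ioc_mem_nhdsGT one_pos] with t ht
    exact kktAux_superg hφ hx ht
  have h2 : Tendsto (fun t : ℝ => x * φ x + fderivPhi φ x * (t - x))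
      (nhdsWithin (0:ℝ) (Set.Ioi 0)) (nhds (x * φ x + fderivPhi φ x * (0 - x))) := by
    exact tendsto_const_nhds.add
      (((tendsto_id.mono_left nhdsWithin_le_nhds).sub_const x).const_mul _)
  exact le_of_tendsto_of_tendsto hA2 h2 hev

lemma kktAux_supergIcc (hφ : IsRegularizer φ) (hA2 : Assumption2 φ) {x y : ℝ}
    (hx : x ∈ Set.Ioc (0:ℝ) 1) (hy0 : 0 ≤ y) (hy1 : y ≤ 1) :
    y * φ y ≤ x * φ x + fderivPhi φ x * (y - x) := by
  rcases eq_or_lt_of_le hy0 with h | h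
  · rw [← h]
    simpa using kktAux_superg0 hφ hA2 hx
  · exact kktAux_superg hφ hx ⟨h, hy1⟩

lemma kktAux_fderiv_le_phi (hφ : IsRegularizer φ) (hA2 : Assumption2 φ) {x : ℝ}
    (hx : x ∈ Set.Ioc (0:ℝ) 1) : fderivPhi φ x ≤ φ x := by
  have h := kktAux_superg0 hφ hA2 hx
  have hx0 := hx.1
  have h2 : fderivPhi φ x * x ≤ φ x * x := by nlinarith
  exact le_of_mul_le_mul_right h2 hx0

lemma kktAux_fderiv_anti (hφ : IsRegularizer φ) {x y : ℝ} (hx : x ∈ Set.Ioc (0:ℝ) 1)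
    (hy : y ∈ Set.Ioc (0:ℝ) 1) (hxy : x ≤ y) : fderivPhi φ y ≤ fderivPhi φ x := by
  rcases eq_or_lt_of_le hxy with rfl | h
  · exact le_rfl
  have h1 := kktAux_superg hφ hx hy
  have h2 := kktAux_superg hφ hy hx
  nlinarith [sub_pos.2 h]

lemma kktAux_tendsto_right (hφ : IsRegularizer φ) {x : ℝ} (hx : x ∈ Set.Ioc (0:ℝ) 1) (hx1 : x < 1) :
    Tendsto (fun t : ℝ => ((x + t) * φ (x + t) - x * φ x) / t)
      (nhdsWithin (0:ℝ) (Set.Ioi 0)) (nhds (fderivPhi φ x)) := by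
  have hcomp : Tendsto (fun t : ℝ => x + t) (nhdsWithin (0:ℝ) (Set.Ioi 0))
      (nhdsWithin x (Set.Ioc 0 1 \ {x})) := by
    rw [tendsto_nhdsWithin_iff]
    constructor
    · have hc : Tendsto (fun t : ℝ => x + t) (nhds 0) (nhds (x + 0)) :=
        (continuous_const.add continuous_id).tendsto 0
      simpa using hc.mono_left nhdsWithin_le_nhds
    · filter_upwards [Ioo_mem_nhdsGT (by linarith : (0:ℝ) < 1 - x)] with t ht
      simp only [Set.mem_diff, Set.mem_Ioc, Set.mem_singleton_iff]
      refine ⟨⟨by linarith [hx.1, ht.1], by linarith [ht.2]⟩, ?_⟩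
      intro h
      have : t = 0 := by linarith
      linarith [ht.1]
  have h := (kktAux_slope_tendsto hφ hx).comp hcomp
  refine h.congr fun t => ?_
  simp [Function.comp, slope_def_field, add_sub_cancel_left]

lemma kktAux_tendsto_left (hφ : IsRegularizer φ) {x : ℝ} (hx : x ∈ Set.Ioc (0:ℝ) 1) :
    Tendsto (fun t : ℝ => (x * φ x - (x - t) * φ (x - t)) / t)
      (nhdsWithin (0:ℝ) (Set.Ioi 0)) (nhds (fderivPhi φ x)) := by
  have hcomp : Tendsto (fun t : ℝ => x - t) (nhdsWithin (0:ℝ) (Set.Ioi 0))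
      (nhdsWithin x (Set.Ioc 0 1 \ {x})) := by
    rw [tendsto_nhdsWithin_iff]
    constructor
    · have hc : Tendsto (fun t : ℝ => x - t) (nhds 0) (nhds (x - 0)) :=
        (continuous_const.sub continuous_id).tendsto 0
      simpa using hc.mono_left nhdsWithin_le_nhds
    · filter_upwards [Ioo_mem_nhdsGT hx.1] with t ht
      simp only [Set.mem_diff, Set.mem_Ioc, Set.mem_singleton_iff]
      refine ⟨⟨by linarith [ht.2], by linarith [hx.2, ht.1]⟩, ?_⟩
      intro h
      have : t = 0 := by linarith
      linarith [ht.1]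
  have h := (kktAux_slope_tendsto hφ hx).comp hcomp
  refine h.congr fun t => ?_
  simp only [Function.comp, slope_def_field]
  rw [show x - t - x = -t by ring, div_neg, ← neg_div, neg_sub]

end KKTAuxSection

/-- KKT characterization of maximizers of the per-state regularized objective
`F_λ(p) = ∑ a, (p a · Q a + λ·f_φ(p a))` over the simplex: `p` is a maximizer iff
there is `μ ∈ ℝ` with `Q a + λ·f'_φ(p a) = μ` whenever `p a > 0`, and
`Q a + λ·f'_φ(x) ≤ μ` for all `x ∈ (0,1)` whenever `p a = 0`. -/
theorem maximizer_iff_kkt (A : Type*) [Fintype A] [Nonempty A]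
    (φ : ℝ → ℝ) (hφ : IsRegularizer φ) (hA2 : Assumption2 φ)
    (lam : ℝ) (hlam : 0 < lam) (Q : A → ℝ)
    (p : A → ℝ) (hp0 : ∀ a, 0 ≤ p a) (hp1 : ∑ a, p a = 1) :
    (∀ q : A → ℝ, (∀ a, 0 ≤ q a) → (∑ a, q a = 1) →
        (∑ a, (q a * Q a + lam * (q a * φ (q a)))) ≤
          ∑ a, (p a * Q a + lam * (p a * φ (p a)))) ↔
      ∃ μ : ℝ, ∀ a,
        (0 < p a → Q a + lam * fderivPhi φ (p a) = μ) ∧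
        (p a = 0 → ∀ x ∈ Set.Ioo (0 : ℝ) 1, Q a + lam * fderivPhi φ x ≤ μ) := by
  classical
  have hple : ∀ a, p a ≤ 1 := by
    intro a
    rw [← hp1]
    exact Finset.single_le_sum (fun b _ => hp0 b) (Finset.mem_univ a)
  have hdiv : ∀ c d X Y t : ℝ, 0 < t → t * c + lam * X ≤ t * d + lam * Y →
      c + lam * (X / t) ≤ d + lam * (Y / t) := by
    intro c d X Y t ht h
    have ht' : t ≠ 0 := ne_of_gt ht
    have e1 : c + lam * (X / t) = (t * c + lam * X) / t := by field_simp
    have e2 : d + lam * (Y / t) = (t * d + lam * Y) / t := by field_simp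
    rw [e1, e2, div_le_div_iff₀ ht ht]
    exact mul_le_mul_of_nonneg_right h ht.le
  constructor
  · intro hopt
    obtain ⟨a0, ha0⟩ : ∃ a, 0 < p a := by
      by_contra h
      push_neg at h
      have hz : ∑ a, p a = 0 := Finset.sum_eq_zero fun a _ => le_antisymm (h a) (hp0 a)
      rw [hz] at hp1
      norm_num at hp1
    have ha0S : p a0 ∈ Set.Ioc (0:ℝ) 1 := ⟨ha0, hple a0⟩
    have key : ∀ a b : A, a ≠ b → ∀ t : ℝ, 0 ≤ t → t ≤ p b →
        t * Q a + lam * ((p a + t) * φ (p a + t) - p a * φ (p a)) ≤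
        t * Q b + lam * (p b * φ (p b) - (p b - t) * φ (p b - t)) := by
      intro a b hab t ht0 htb
      set q : A → ℝ := fun c => if c = a then p a + t else if c = b then p b - t else p c
        with hqdef
      have hqa : q a = p a + t := by simp [q]
      have hqb : q b = p b - t := by simp [q, Ne.symm hab]
      have hqc : ∀ c, c ≠ a → c ≠ b → q c = p c := by
        intro c h1 h2; simp [q, h1, h2]
      have hq0 : ∀ c, 0 ≤ q c := by
        intro c
        by_cases h1 : c = a
        · subst h1; rw [hqa]; linarith [hp0 c]
        by_cases h2 : c = b
        · subst h2; rw [hqb]; linarith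
        · rw [hqc c h1 h2]; exact hp0 c
      have hdiffsum : ∀ g : A → ℝ → ℝ, (∑ c, g c (q c)) - (∑ c, g c (p c)) =
          (g a (q a) - g a (p a)) + (g b (q b) - g b (p b)) := by
        intro g
        rw [← Finset.sum_sub_distrib,
          ← Finset.sum_subset (Finset.subset_univ ({a, b} : Finset A))]
        · rw [Finset.sum_pair hab]
        · intro c _ hc
          simp only [Finset.mem_insert, Finset.mem_singleton] at hc
          push_neg at hc
          rw [hqc c hc.1 hc.2, sub_self]
      have hqsum : ∑ c, q c = 1 := by
        have h := hdiffsum (fun _ y => y)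
        rw [hqa, hqb] at h
        have h2 : (∑ c, q c) - (∑ c, p c) = 0 := by rw [h]; ring
        linarith [hp1, h2]
      have hobj := hopt q hq0 hqsum
      have h2 := hdiffsum (fun c y => y * Q c + lam * (y * φ y))
      rw [hqa, hqb] at h2
      have h3 : ((p a + t) * Q a + lam * ((p a + t) * φ (p a + t)) -
            (p a * Q a + lam * (p a * φ (p a)))) +
          ((p b - t) * Q b + lam * ((p b - t) * φ (p b - t)) -
            (p b * Q b + lam * (p b * φ (p b)))) ≤ 0 := by
        rw [← h2]
        linarith
      nlinarith [h3]
    refine ⟨Q a0 + lam * fderivPhi φ (p a0), fun a => ⟨?_, ?_⟩⟩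
    · intro hpa
      rcases eq_or_ne a a0 with rfl | hne
      · rfl
      have hS : p a ∈ Set.Ioc (0:ℝ) 1 := ⟨hpa, hple a⟩
      have hsum2 : p a + p a0 ≤ 1 := by
        rw [← hp1]
        have h := Finset.sum_le_sum_of_subset_of_nonneg
          (Finset.subset_univ ({a, a0} : Finset A)) (fun c _ _ => hp0 c)
        rwa [Finset.sum_pair hne] at h
      have hpa1 : p a < 1 := by linarith
      have hpa01 : p a0 < 1 := by linarith
      have h1 : Q a + lam * fderivPhi φ (p a) ≤ Q a0 + lam * fderivPhi φ (p a0) := by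
        apply le_of_tendsto_of_tendsto
          (tendsto_const_nhds.add ((kktAux_tendsto_right hφ hS hpa1).const_mul lam))
          (tendsto_const_nhds.add ((kktAux_tendsto_left hφ ha0S).const_mul lam))
        filter_upwards [Ioc_mem_nhdsGT ha0, eventually_mem_nhdsWithin] with t ht htp
        have ht0 : (0:ℝ) < t := htp
        exact hdiv _ _ _ _ t ht0 (key a a0 hne t ht0.le ht.2)
      have h2 : Q a0 + lam * fderivPhi φ (p a0) ≤ Q a + lam * fderivPhi φ (p a) := by
        apply le_of_tendsto_of_tendsto
          (tendsto_const_nhds.add ((kktAux_tendsto_right hφ ha0S hpa01).const_mul lam))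
          (tendsto_const_nhds.add ((kktAux_tendsto_left hφ hS).const_mul lam))
        filter_upwards [Ioc_mem_nhdsGT hpa, eventually_mem_nhdsWithin] with t ht htp
        have ht0 : (0:ℝ) < t := htp
        exact hdiv _ _ _ _ t ht0 (key a0 a hne.symm t ht0.le ht.2)
      linarith
    · intro hpa x hx
      have hne : a ≠ a0 := by
        intro h
        rw [h] at hpa
        exact ha0.ne' hpa
      apply ge_of_tendsto (tendsto_const_nhds.add ((kktAux_tendsto_left hφ ha0S).const_mul lam))
      filter_upwards [Ioc_mem_nhdsGT ha0, Ioo_mem_nhdsGT hx.1,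
        eventually_mem_nhdsWithin] with t ht1 ht2 ht3
      have ht0 : (0:ℝ) < t := ht3
      have ht' : t ≠ 0 := ne_of_gt ht0
      have htS : t ∈ Set.Ioc (0:ℝ) 1 := ⟨ht0, by linarith [hx.2, ht2.2]⟩
      have hfa : fderivPhi φ x ≤ fderivPhi φ t := kktAux_fderiv_anti hφ htS ⟨hx.1, hx.2.le⟩ ht2.2.le
      have hfp : fderivPhi φ t ≤ φ t := kktAux_fderiv_le_phi hφ hA2 htS
      have hk := key a a0 hne t ht0.le ht1.2
      rw [hpa] at hk
      simp only [zero_add, zero_mul, sub_zero] at hk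
      have step1 : Q a + lam * fderivPhi φ x ≤ Q a + lam * φ t := by nlinarith
      have step2 : Q a + lam * φ t ≤ Q a0 + lam *
          ((p a0 * φ (p a0) - (p a0 - t) * φ (p a0 - t)) / t) := by
        have e : Q a0 + lam * ((p a0 * φ (p a0) - (p a0 - t) * φ (p a0 - t)) / t) =
            (t * Q a0 + lam * (p a0 * φ (p a0) - (p a0 - t) * φ (p a0 - t))) / t := by
          field_simp
        rw [e, le_div_iff₀ ht0]
        nlinarith [hk]
      linarith
  · rintro ⟨μ, hμ⟩ q hq0 hq1
    have hqle : ∀ a, q a ≤ 1 := by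
      intro a
      rw [← hq1]
      exact Finset.single_le_sum (fun b _ => hq0 b) (Finset.mem_univ a)
    have hkey : ∀ a, q a * Q a + lam * (q a * φ (q a)) ≤
        p a * Q a + lam * (p a * φ (p a)) + μ * (q a - p a) := by
      intro a
      rcases eq_or_lt_of_le (hp0 a) with hz | hpos
      · rw [← hz]
        simp only [zero_mul, mul_zero, add_zero, sub_zero, zero_add]
        rcases eq_or_lt_of_le (hq0 a) with hqz | hqpos
        · rw [← hqz]; simp
        · have hT : Tendsto (fun t : ℝ => q a * Q a + lam * (t * φ t) + (μ - Q a) * (q a - t))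
              (nhdsWithin (0:ℝ) (Set.Ioi 0))
              (nhds (q a * Q a + lam * 0 + (μ - Q a) * (q a - 0))) := by
            refine (tendsto_const_nhds.add (hA2.const_mul lam)).add ?_
            exact (tendsto_const_nhds.sub (tendsto_id.mono_left nhdsWithin_le_nhds)).const_mul _
          have hT' : q a * Q a + lam * 0 + (μ - Q a) * (q a - 0) = μ * q a := by ring
          rw [hT'] at hT
          apply ge_of_tendsto hT
          filter_upwards [Ioo_mem_nhdsGT hqpos, Ioo_mem_nhdsGT one_pos]
            with t h1 h2
          have htS : t ∈ Set.Ioc (0:ℝ) 1 := ⟨h1.1, h2.2.le⟩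
          have hsg := kktAux_superg hφ htS ⟨hqpos, hqle a⟩
          have hcond := (hμ a).2 hz.symm t ⟨h1.1, h2.2⟩
          nlinarith [mul_le_mul_of_nonneg_left hsg hlam.le,
            mul_nonneg (sub_nonneg.2 hcond) (sub_nonneg.2 h1.2.le)]
      · have hμa := (hμ a).1 hpos
        have hsg := kktAux_supergIcc hφ hA2 ⟨hpos, hple a⟩ (hq0 a) (hqle a)
        rw [← hμa]
        nlinarith [mul_le_mul_of_nonneg_left hsg hlam.le]
    calc ∑ a, (q a * Q a + lam * (q a * φ (q a)))
        ≤ ∑ a, (p a * Q a + lam * (p a * φ (p a)) + μ * (q a - p a)) :=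
          Finset.sum_le_sum fun a _ => hkey a
      _ = (∑ a, (p a * Q a + lam * (p a * φ (p a)))) + μ * ((∑ a, q a) - ∑ a, p a) := by
          rw [Finset.sum_add_distrib, ← Finset.mul_sum, Finset.sum_sub_distrib]
      _ = ∑ a, (p a * Q a + lam * (p a * φ (p a))) := by rw [hq1, hp1]; ring
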